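/- For m ∈ ℕ define a_m = Σ (min(⌊j0/3⌋, ⌊(j2 − j0)/3⌋ + ⌊j0/3⌋) + 1)·x1^{j1} x2^{j2}, the sum being over all (j0, j1, j2) ∈ ℕ³ with j0 + 3j1 + j2 = m, where min is taken in ℤ. Then in R[[t]] one has (Σ_{m=0}^∞ a_m t^m) · (1 − t³)(1 − t³·x1)(1 − t·x2)(1 − t²·x2) = 1. -/

import Mathlib

open scoped BigOperators

section Aux

abbrev Rr : Type := MvPolynomial (Fin 2) ℚ

private def dd (j0 j2 : ℕ) : ℤ :=
  min (Int.fdiv (j0 : ℤ) 3) (Int.fdiv ((j2 : ℤ) - (j0 : ℤ)) 3 + Int.fdiv (j0 : ℤ) 3) + 1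

private noncomputable def aa (m : ℕ) : Rr :=
  ∑ j ∈ (Finset.range (m + 1) ×ˢ Finset.range (m + 1) ×ˢ Finset.range (m + 1)).filter
      (fun j => j.1 + 3 * j.2.1 + j.2.2 = m),
    ((dd j.1 j.2.2 : ℤ) : Rr) * MvPolynomial.X 0 ^ j.2.1 * MvPolynomial.X 1 ^ j.2.2

private noncomputable def cc (n : ℕ) : Rr :=
  ∑ j2 ∈ Finset.range (n + 1), ((dd (n - j2) j2 : ℤ) : Rr) * MvPolynomial.X 1 ^ j2

private noncomputable def c2 (n : ℕ) : Rr :=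
  ∑ j2 ∈ Finset.range (n + 1),
    (((if n ≤ 2 * j2 then 1 else 0) : ℤ) : Rr) * MvPolynomial.X 1 ^ j2

private noncomputable def c3 (n : ℕ) : Rr :=
  if 2 ∣ n then MvPolynomial.X 1 ^ (n / 2) else 0

private lemma mk_mul_one_sub (f : ℕ → Rr) (u : Rr) (k : ℕ) :
    (PowerSeries.mk f) * (1 - PowerSeries.C (R := Rr) u * PowerSeries.X ^ k)
      = PowerSeries.mk (fun n => f n - u * (if k ≤ n then f (n - k) else 0)) := by
  refine PowerSeries.ext fun n => ?_
  rw [mul_sub, mul_one,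
    show PowerSeries.mk f * (PowerSeries.C (R := Rr) u * PowerSeries.X ^ k)
        = PowerSeries.C (R := Rr) u * (PowerSeries.mk f * PowerSeries.X ^ k) by ring]
  simp [PowerSeries.coeff_C_mul, PowerSeries.coeff_mul_X_pow', mul_ite]

private lemma dd_key (j0 j2 : ℕ) :
    dd j0 j2 - (if 3 ≤ j0 then dd (j0 - 3) j2 else 0) = if j0 ≤ j2 then 1 else 0 := by
  unfold dd
  simp only [show ∀ a : ℤ, Int.fdiv a 3 = a / 3 from fun a => Int.fdiv_eq_ediv_of_nonneg a (by norm_num),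
    min_def]
  split_ifs <;> omega

private lemma aa_eq (n : ℕ) :
    aa n = ∑ j1 ∈ Finset.range (n / 3 + 1), MvPolynomial.X 0 ^ j1 * cc (n - 3 * j1) := by
  unfold aa cc
  simp_rw [Finset.mul_sum]
  rw [Finset.sum_sigma']
  refine Finset.sum_bij' (fun j _ => (⟨j.2.1, j.2.2⟩ : Σ _ : ℕ, ℕ))
    (fun p _ => (n - 3 * p.1 - p.2, p.1, p.2)) ?_ ?_ ?_ ?_ ?_
  · intro j hj
    simp only [Finset.mem_filter, Finset.mem_product, Finset.mem_range] at hj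
    simp only [Finset.mem_sigma, Finset.mem_range]
    omega
  · intro p hp
    simp only [Finset.mem_sigma, Finset.mem_range] at hp
    simp only [Finset.mem_filter, Finset.mem_product, Finset.mem_range]
    omega
  · intro j hj
    simp only [Finset.mem_filter, Finset.mem_product, Finset.mem_range] at hj
    ext <;> simp <;> omega
  · intro p hp; rfl
  · intro j hj
    simp only [Finset.mem_filter, Finset.mem_product, Finset.mem_range] at hj
    have h1 : n - 3 * j.2.1 - j.2.2 = j.1 := by omega
    rw [h1]
    ring

private lemma step1 :
    PowerSeries.mk aa *
        (1 - PowerSeries.C (R := Rr) (MvPolynomial.X 0) * PowerSeries.X ^ 3) = PowerSeries.mk cc := by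
  rw [mk_mul_one_sub]
  refine PowerSeries.ext fun n => ?_
  simp only [PowerSeries.coeff_mk]
  rw [aa_eq]
  by_cases h : 3 ≤ n
  · rw [if_pos h, aa_eq]
    rw [show n / 3 + 1 = ((n - 3) / 3 + 1) + 1 by omega, Finset.sum_range_succ']
    have e : ∀ i ∈ Finset.range ((n - 3) / 3 + 1),
        MvPolynomial.X (R := ℚ) 0 ^ (i + 1) * cc (n - 3 * (i + 1))
          = MvPolynomial.X 0 * (MvPolynomial.X 0 ^ i * cc (n - 3 - 3 * i)) := by
      intro i _
      rw [show n - 3 * (i + 1) = n - 3 - 3 * i by omega, pow_succ]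
      ring
    rw [Finset.sum_congr rfl e, ← Finset.mul_sum]
    simp
  · rw [if_neg h]
    rw [show n / 3 = 0 by omega]
    simp

private lemma step2 :
    PowerSeries.mk cc * (1 - PowerSeries.X ^ 3) = PowerSeries.mk c2 := by
  rw [show (1 - PowerSeries.X ^ 3 : PowerSeries Rr)
      = 1 - PowerSeries.C (R := Rr) 1 * PowerSeries.X ^ 3 by simp]
  rw [mk_mul_one_sub]
  refine PowerSeries.ext fun n => ?_
  simp only [PowerSeries.coeff_mk, one_mul]
  by_cases h : 3 ≤ n
  · rw [if_pos h]
    have hext : cc (n - 3) = ∑ j2 ∈ Finset.range (n + 1),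
        (((if j2 ≤ n - 3 then dd (n - 3 - j2) j2 else 0) : ℤ) : Rr) * MvPolynomial.X 1 ^ j2 := by
      unfold cc
      rw [← Finset.sum_subset (Finset.range_subset_range.2 (by omega : n - 3 + 1 ≤ n + 1))]
      · refine Finset.sum_congr rfl fun j2 hj2 => ?_
        simp only [Finset.mem_range] at hj2
        rw [if_pos (by omega)]
      · intro j2 _ hj2
        simp only [Finset.mem_range] at hj2
        rw [if_neg (by omega)]
        simp
    rw [hext]
    unfold cc c2
    rw [← Finset.sum_sub_distrib]
    refine Finset.sum_congr rfl fun j2 hj2 => ?_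
    simp only [Finset.mem_range] at hj2
    rw [← sub_mul, ← Int.cast_sub]
    congr 1
    congr 1
    have hk := dd_key (n - j2) j2
    rw [show n - j2 - 3 = n - 3 - j2 by omega] at hk
    split_ifs at hk ⊢ <;> first | exact hk | omega
  · rw [if_neg h, sub_zero]
    unfold cc c2
    refine Finset.sum_congr rfl fun j2 hj2 => ?_
    simp only [Finset.mem_range] at hj2
    congr 1
    have hk := dd_key (n - j2) j2
    rw [if_neg (by omega)] at hk
    rw [sub_zero] at hk
    rw [hk]
    split_ifs <;> first | rfl | omega

private lemma step3 :
    PowerSeries.mk c2 * (1 - PowerSeries.C (R := Rr) (MvPolynomial.X 1) * PowerSeries.X)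
      = PowerSeries.mk c3 := by
  rw [show (PowerSeries.X : PowerSeries Rr) = PowerSeries.X ^ 1 by rw [pow_one]]
  rw [mk_mul_one_sub]
  refine PowerSeries.ext fun n => ?_
  simp only [PowerSeries.coeff_mk]
  rcases Nat.eq_zero_or_pos n with hn | hn
  · subst hn
    simp [c2, c3]
  · rw [if_pos (by omega : 1 ≤ n)]
    have h2 : MvPolynomial.X (R := ℚ) 1 * c2 (n - 1)
        = ∑ i ∈ Finset.range n,
            (((if n - 1 ≤ 2 * i then 1 else 0) : ℤ) : Rr) * MvPolynomial.X 1 ^ (i + 1) := by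
      unfold c2
      rw [show n - 1 + 1 = n by omega, Finset.mul_sum]
      refine Finset.sum_congr rfl fun i _ => ?_
      rw [pow_succ]
      ring
    have h1 : c2 n = (∑ i ∈ Finset.range n,
        (((if n ≤ 2 * (i + 1) then 1 else 0) : ℤ) : Rr) * MvPolynomial.X 1 ^ (i + 1))
          + (((if n ≤ 0 then 1 else 0) : ℤ) : Rr) := by
      unfold c2
      rw [Finset.sum_range_succ']
      simp
    rw [h1, h2, if_neg (by omega : ¬ n ≤ 0), Int.cast_zero, add_zero, ← Finset.sum_sub_distrib]
    have h3 : ∀ i ∈ Finset.range n,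
        (((if n ≤ 2 * (i + 1) then 1 else 0) : ℤ) : Rr) * MvPolynomial.X 1 ^ (i + 1)
          - (((if n - 1 ≤ 2 * i then 1 else 0) : ℤ) : Rr) * MvPolynomial.X 1 ^ (i + 1)
        = (((if n = 2 * (i + 1) then 1 else 0) : ℤ) : Rr) * MvPolynomial.X 1 ^ (i + 1) := by
      intro i _
      rw [← sub_mul, ← Int.cast_sub]
      congr 2
      split_ifs <;> omega
    rw [Finset.sum_congr rfl h3]
    unfold c3
    by_cases hd : 2 ∣ n
    · obtain ⟨m, rfl⟩ := hd
      have hm : 1 ≤ m := by omega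
      rw [if_pos ⟨m, rfl⟩]
      rw [Finset.sum_eq_single_of_mem (m - 1) (by simp only [Finset.mem_range]; omega)]
      · rw [if_pos (by omega), show m - 1 + 1 = m by omega,
          show 2 * m / 2 = m by omega]
        simp
      · intro i _ hi
        rw [if_neg (by omega)]
        simp
    · rw [if_neg hd]
      refine Finset.sum_eq_zero fun i _ => ?_
      rw [if_neg (by omega)]
      simp

private lemma step4 :
    PowerSeries.mk c3 * (1 - PowerSeries.C (R := Rr) (MvPolynomial.X 1) * PowerSeries.X ^ 2)
      = 1 := by
  rw [mk_mul_one_sub]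
  refine PowerSeries.ext fun n => ?_
  simp only [PowerSeries.coeff_mk, PowerSeries.coeff_one]
  by_cases h : 2 ≤ n
  · rw [if_pos h, if_neg (by omega : ¬ n = 0)]
    unfold c3
    by_cases hd : 2 ∣ n
    · rw [if_pos hd, if_pos (by omega : 2 ∣ n - 2)]
      rw [show n / 2 = (n - 2) / 2 + 1 by omega, pow_succ]
      ring
    · rw [if_neg hd, if_neg (by omega : ¬ 2 ∣ n - 2)]
      simp
  · rw [if_neg h, mul_zero, sub_zero]
    unfold c3
    interval_cases n
    · simp
    · rw [if_neg (by omega), if_neg (by omega)]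

end Aux

/-- Over `R = ℚ[x1,x2]`, with
`a_m = ∑ (min(⌊j0/3⌋, ⌊(j2-j0)/3⌋+⌊j0/3⌋) + 1)·x1^j1 x2^j2`, summed over
`(j0,j1,j2) ∈ ℕ³` with `j0+3j1+j2 = m` (min taken in `ℤ`, floors as `Int.fdiv`), we have
`(∑_m a_m t^m)·(1-t³)(1-t³·x1)(1-t·x2)(1-t²·x2) = 1` in `R[[t]]`. -/
theorem stmt_8 :
    (PowerSeries.mk (fun m : ℕ =>
      ∑ j ∈ (Finset.range (m + 1) ×ˢ Finset.range (m + 1) ×ˢ Finset.range (m + 1)).filter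
          (fun j => j.1 + 3 * j.2.1 + j.2.2 = m),
        (((min (Int.fdiv (j.1 : ℤ) 3)
              (Int.fdiv ((j.2.2 : ℤ) - (j.1 : ℤ)) 3 + Int.fdiv (j.1 : ℤ) 3) + 1) : ℤ) :
            MvPolynomial (Fin 2) ℚ) *
          MvPolynomial.X 0 ^ j.2.1 * MvPolynomial.X 1 ^ j.2.2)) *
      ((1 - PowerSeries.X ^ 3) *
        (1 - PowerSeries.C (MvPolynomial.X 0 : MvPolynomial (Fin 2) ℚ) * PowerSeries.X ^ 3) *
        (1 - PowerSeries.C (MvPolynomial.X 1 : MvPolynomial (Fin 2) ℚ) * PowerSeries.X) *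
        (1 - PowerSeries.C (MvPolynomial.X 1 : MvPolynomial (Fin 2) ℚ) * PowerSeries.X ^ 2)) =
      1 := by
  have ha : (PowerSeries.mk (fun m : ℕ =>
      ∑ j ∈ (Finset.range (m + 1) ×ˢ Finset.range (m + 1) ×ˢ Finset.range (m + 1)).filter
          (fun j => j.1 + 3 * j.2.1 + j.2.2 = m),
        (((min (Int.fdiv (j.1 : ℤ) 3)
              (Int.fdiv ((j.2.2 : ℤ) - (j.1 : ℤ)) 3 + Int.fdiv (j.1 : ℤ) 3) + 1) : ℤ) :
            MvPolynomial (Fin 2) ℚ) *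
          MvPolynomial.X 0 ^ j.2.1 * MvPolynomial.X 1 ^ j.2.2)) = PowerSeries.mk aa := rfl
  rw [ha]
  rw [show ((1 - PowerSeries.X ^ 3) *
        (1 - PowerSeries.C (MvPolynomial.X 0 : MvPolynomial (Fin 2) ℚ) * PowerSeries.X ^ 3) *
        (1 - PowerSeries.C (MvPolynomial.X 1 : MvPolynomial (Fin 2) ℚ) * PowerSeries.X) *
        (1 - PowerSeries.C (MvPolynomial.X 1 : MvPolynomial (Fin 2) ℚ) * PowerSeries.X ^ 2))
      = (1 - PowerSeries.C (R := Rr) (MvPolynomial.X 0) * PowerSeries.X ^ 3) *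
        ((1 - PowerSeries.X ^ 3) *
          ((1 - PowerSeries.C (R := Rr) (MvPolynomial.X 1) * PowerSeries.X) *
            (1 - PowerSeries.C (R := Rr) (MvPolynomial.X 1) * PowerSeries.X ^ 2))) from by ring]
  rw [← mul_assoc, step1, ← mul_assoc, step2, ← mul_assoc, step3, step4]
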